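/- Let $G$ be a bipartite graph on vertices $x_1,\ldots,x_n$ with edge ideal $I = (u_1,\ldots,u_t,u_{t+1}) \subset K[x_1,\ldots,x_n]$, and set $J = (u_1,\ldots,u_t)$. Then $I^r J^s = I^{r+s} \cap J^s$ for all integers $r, s \ge 0$. -/

import Mathlib

open MvPolynomial

namespace Stmt17
variable {n : ℕ}

noncomputable def ev (p : Fin n × Fin n) : Fin n →₀ ℕ :=
  Finsupp.single p.1 1 + Finsupp.single p.2 1
noncomputable def sv (M : Multiset (Fin n × Fin n)) : Fin n →₀ ℕ := (M.map ev).sum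

@[simp] lemma sv_zero : sv (0 : Multiset (Fin n × Fin n)) = 0 := rfl
@[simp] lemma sv_cons (p : Fin n × Fin n) (M : Multiset (Fin n × Fin n)) :
    sv (p ::ₘ M) = ev p + sv M := by simp [sv]
@[simp] lemma sv_add (M₁ M₂ : Multiset (Fin n × Fin n)) :
    sv (M₁ + M₂) = sv M₁ + sv M₂ := by simp [sv]

lemma filter_card_mono {A : Type*} {M : Multiset A} {P Q : A → Prop}
    [DecidablePred P] [DecidablePred Q]
    (h : ∀ a ∈ M, P a → Q a) : (M.filter P).card ≤ (M.filter Q).card := by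
  induction M using Multiset.induction_on with
  | empty => simp
  | cons a M ih =>
    have h' : ∀ b ∈ M, P b → Q b := fun b hb => h b (by simp [hb])
    have hih := ih h'
    have ha := h a (by simp)
    rw [Multiset.filter_cons, Multiset.filter_cons]
    by_cases hP : P a <;> by_cases hQ : Q a <;>
      simp_all [Multiset.card_add] <;> omega

lemma card_filter_mem {A : Type*} (M : Multiset A) (g : A → Fin n) (T : Finset (Fin n)) :
    (M.filter (fun a => g a ∈ T)).card = ∑ y ∈ T, (M.filter (fun a => g a = y)).card := by
  classical
  induction M using Multiset.induction_on with
  | empty => simp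
  | cons a M ih =>
    simp only [Multiset.filter_cons, Multiset.card_add, apply_ite (Multiset.card),
      Multiset.card_singleton, Multiset.card_zero, ih, Finset.sum_add_distrib,
      Finset.sum_ite_eq]

lemma exists_le_card {A : Type*} (M : Multiset A) (k : ℕ) (h : k ≤ M.card) :
    ∃ M' : Multiset A, M' ≤ M ∧ M'.card = k := by
  refine ⟨(M.toList.take k : List A), ?_, ?_⟩
  · calc ((M.toList.take k : List A) : Multiset A) ≤ (M.toList : Multiset A) :=
        Multiset.coe_le.2 (M.toList.take_sublist k).subperm
      _ = M := M.coe_toList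
  · have := M.length_toList
    simp only [Multiset.coe_card, List.length_take]
    omega

def fstC (M : Multiset (Fin n × Fin n)) (x : Fin n) : ℕ :=
  (M.filter (fun p => p.1 = x)).card
def sndC (M : Multiset (Fin n × Fin n)) (x : Fin n) : ℕ :=
  (M.filter (fun p => p.2 = x)).card

lemma ev_apply (p : Fin n × Fin n) (x : Fin n) :
    ev p x = (if p.1 = x then 1 else 0) + (if p.2 = x then 1 else 0) := by
  simp [ev, Finsupp.add_apply, Finsupp.single_apply]

lemma sv_apply (M : Multiset (Fin n × Fin n)) (x : Fin n) :
    sv M x = fstC M x + sndC M x := by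
  induction M using Multiset.induction_on with
  | empty => simp [fstC, sndC]
  | cons p M ih =>
    simp only [sv_cons, Finsupp.add_apply, ih, ev_apply, fstC, sndC,
      Multiset.filter_cons, Multiset.card_add, apply_ite (Multiset.card),
      Multiset.card_singleton, Multiset.card_zero]
    by_cases h1 : p.1 = x <;> by_cases h2 : p.2 = x <;> simp [h1, h2] <;> omega

lemma count_bound {M : Multiset (Fin n × Fin n)} {d : Fin n →₀ ℕ}
    {blacks Sb Ww : Finset (Fin n)}
    (hmem : ∀ p ∈ M, p.1 ∈ blacks)
    (hd : ∀ x, fstC M x + sndC M x ≤ d x)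
    (hcross : ∀ p ∈ M, p.1 ∈ Sb → p.2 ∈ Ww) :
    M.card ≤ ∑ x ∈ blacks \ Sb, d x + ∑ y ∈ Ww, d y := by
  classical
  have hsplit := Multiset.filter_add_not (fun p : Fin n × Fin n => p.1 ∈ Sb) M
  have hcards : (M.filter (fun p => p.1 ∈ Sb)).card
      + (M.filter (fun p => ¬ p.1 ∈ Sb)).card = M.card := by
    rw [← Multiset.card_add, hsplit]
  have h1 : (M.filter (fun p => p.1 ∈ Sb)).card ≤ ∑ y ∈ Ww, d y := by
    calc (M.filter (fun p => p.1 ∈ Sb)).card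
        ≤ (M.filter (fun p => p.2 ∈ Ww)).card := filter_card_mono hcross
      _ = ∑ y ∈ Ww, (M.filter (fun p => p.2 = y)).card := card_filter_mem M Prod.snd Ww
      _ ≤ ∑ y ∈ Ww, d y := Finset.sum_le_sum (fun y _ => le_trans (Nat.le_add_left _ _) (hd y))
  have h2 : (M.filter (fun p => ¬ p.1 ∈ Sb)).card ≤ ∑ x ∈ blacks \ Sb, d x := by
    calc (M.filter (fun p => ¬ p.1 ∈ Sb)).card
        ≤ (M.filter (fun p => p.1 ∈ blacks \ Sb)).card := by
          apply filter_card_mono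
          intro p hp h
          exact Finset.mem_sdiff.mpr ⟨hmem p hp, h⟩
      _ = ∑ x ∈ blacks \ Sb, (M.filter (fun p => p.1 = x)).card :=
          card_filter_mem M Prod.fst (blacks \ Sb)
      _ ≤ ∑ x ∈ blacks \ Sb, d x :=
          Finset.sum_le_sum (fun x _ => le_trans (Nat.le_add_right _ _) (hd x))
  omega

lemma core {c : Fin n → Bool} {Adj : Fin n → Fin n → Prop}
    (hsym : ∀ a b, Adj a b → Adj b a)
    (hcol : ∀ a b, Adj a b → c a ≠ c b)
    {α β : Fin n} (hαβ : Adj α β) (r s : ℕ) (d : Fin n →₀ ℕ)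
    (MA MB : Multiset (Fin n × Fin n))
    (hMAc : MA.card = r + s) (hMAadj : ∀ p ∈ MA, Adj p.1 p.2) (hMAle : sv MA ≤ d)
    (hMBc : MB.card = s) (hMBadj : ∀ p ∈ MB, Adj p.1 p.2)
    (hMBe : ∀ p ∈ MB, ¬(p = (α, β) ∨ p = (β, α))) (hMBle : sv MB ≤ d) :
    ∃ M₁ M₂ : Multiset (Fin n × Fin n), M₁.card = r ∧ M₂.card = s ∧
      (∀ p ∈ M₁, Adj p.1 p.2) ∧
      (∀ p ∈ M₂, Adj p.1 p.2 ∧ ¬(p = (α, β) ∨ p = (β, α))) ∧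
      sv M₁ + sv M₂ ≤ d := by
  classical
  have hcαβ : c α ≠ c β := hcol α β hαβ
  -- orientation
  set ori : Fin n × Fin n → Fin n × Fin n :=
    fun p => if c p.1 = c α then p else p.swap with hori
  have hevori : ∀ p, ev (ori p) = ev p := by
    intro p
    by_cases h : c p.1 = c α <;> simp [hori, h, ev, add_comm]
  set M : Multiset (Fin n × Fin n) := MA.map ori with hM
  set B : Multiset (Fin n × Fin n) := MB.map ori with hB
  have hMc : M.card = r + s := by simp [hM, hMAc]
  have hBc : B.card = s := by simp [hB, hMBc]
  have hsvM : sv M = sv MA := by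
    rw [hM]
    unfold sv
    rw [Multiset.map_map]
    congr 1
    exact Multiset.map_congr rfl (fun p _ => hevori p)
  have hsvB : sv B = sv MB := by
    rw [hB]
    unfold sv
    rw [Multiset.map_map]
    congr 1
    exact Multiset.map_congr rfl (fun p _ => hevori p)
  have horient : ∀ (q : Fin n × Fin n), Adj q.1 q.2 →
      Adj (ori q).1 (ori q).2 ∧ c (ori q).1 = c α ∨
      Adj (ori q).1 (ori q).2 ∧ c (ori q).1 = c α := by
    intro q hq; left
    by_cases h : c q.1 = c α
    · simp only [hori, if_pos h]; exact ⟨hq, h⟩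
    · have h2 : c q.2 = c α := by
        have hne := hcol _ _ hq
        cases hq1 : c q.1 <;> cases hq2 : c q.2 <;> cases hqa : c α <;> simp_all
      simp only [hori, if_neg h]
      exact ⟨hsym _ _ hq, h2⟩
  have hMmem : ∀ p ∈ M, Adj p.1 p.2 ∧ c p.1 = c α := by
    intro p hp
    obtain ⟨q, hq, rfl⟩ := Multiset.mem_map.mp hp
    exact ((horient q (hMAadj q hq)).elim id id)
  have hBmem : ∀ p ∈ B, (Adj p.1 p.2 ∧ c p.1 = c α) ∧ p ≠ (α, β) := by
    intro p hp
    obtain ⟨q, hq, rfl⟩ := Multiset.mem_map.mp hp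
    refine ⟨(horient q (hMBadj q hq)).elim id id, ?_⟩
    intro he
    apply hMBe q hq
    by_cases h : c q.1 = c α
    · left; simpa [hori, h] using he
    · right
      have := he
      simp only [hori, if_neg h] at this
      rw [Prod.ext_iff] at this ⊢
      simp only [Prod.fst_swap, Prod.snd_swap] at this
      exact ⟨this.2, this.1⟩
  have hdM : ∀ x, fstC M x + sndC M x ≤ d x := by
    intro x
    rw [← sv_apply, hsvM]
    exact Finsupp.le_def.mp hMAle x
  have hdB : ∀ x, fstC B x + sndC B x ≤ d x := by
    intro x
    rw [← sv_apply, hsvB]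
    exact Finsupp.le_def.mp hMBle x
  -- the Hall setup
  set blacks : Finset (Fin n) := Finset.univ.filter (fun x => c x = c α) with hblacks
  have hMblack : ∀ p ∈ M, p.1 ∈ blacks := by
    intro p hp
    simp only [hblacks, Finset.mem_filter, Finset.mem_univ, true_and]
    exact (hMmem p hp).2
  have hBblack : ∀ p ∈ B, p.1 ∈ blacks := by
    intro p hp
    simp only [hblacks, Finset.mem_filter, Finset.mem_univ, true_and]
    exact (hBmem p hp).1.2
  set Mb : ℕ := ∑ x ∈ blacks, d x with hMbdef
  have hNle : r + s ≤ Mb := by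
    have h1 : M.filter (fun p => p.1 ∈ blacks) = M :=
      Multiset.filter_eq_self.mpr hMblack
    calc r + s = M.card := hMc.symm
      _ = (M.filter (fun p => p.1 ∈ blacks)).card := by rw [h1]
      _ = ∑ x ∈ blacks, (M.filter (fun p => p.1 = x)).card :=
          card_filter_mem M Prod.fst blacks
      _ ≤ ∑ x ∈ blacks, d x :=
          Finset.sum_le_sum (fun x _ => le_trans (Nat.le_add_right _ _) (hdM x))
  set Kd : ℕ := Mb - (r + s) with hKddef
  have hKN : Kd + (r + s) = Mb := by omega
  -- slot machinery
  have hmk : ∀ (x : Fin n) (i₁ i₂ : Fin (d x)), i₁.val = i₂.val →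
      (⟨x, i₁⟩ : Σ x : Fin n, Fin (d x)) = ⟨x, i₂⟩ := by
    intro x i₁ i₂ h
    exact congrArg (Sigma.mk x) (Fin.ext h)
  have hslot : ∀ (T : Finset {q : (Σ x : Fin n, Fin (d x)) // c q.1 = c α}) (x : Fin n),
      (T.filter (fun q => q.1.1 = x)).card ≤ d x := by
    intro T x
    have h := Finset.card_le_card_of_injOn (s := T.filter (fun q => q.1.1 = x))
      (t := Finset.range (d x))
      (fun q : {q : (Σ x : Fin n, Fin (d x)) // c q.1 = c α} => q.1.2.val) ?_ ?_
    · simpa using h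
    · intro q hq
      have h2 := (Finset.mem_filter.mp hq).2
      rw [Finset.mem_coe, Finset.mem_range, ← h2]
      exact q.1.2.isLt
    · rintro ⟨⟨x₁, i₁⟩, h₁⟩ hq₁ ⟨⟨x₂, i₂⟩, h₂⟩ hq₂ hval
      have e₁ : x₁ = x := (Finset.mem_filter.mp (Finset.mem_coe.mp hq₁)).2
      have e₂ : x₂ = x := (Finset.mem_filter.mp (Finset.mem_coe.mp hq₂)).2
      subst e₁; subst e₂
      exact Subtype.ext (hmk _ _ _ hval)
  have hslotα : ∀ (T : Finset {q : (Σ x : Fin n, Fin (d x)) // c q.1 = c α}),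
      (∀ q ∈ T, q.1.1 = α → r ≤ q.1.2.val) → α ∈ T.image (fun q => q.1.1) →
      (T.filter (fun q => q.1.1 = α)).card + r ≤ d α := by
    intro T hhigh hα
    obtain ⟨q₁, hq₁, hq₁α⟩ := Finset.mem_image.mp hα
    have h := Finset.card_le_card_of_injOn (s := T.filter (fun q => q.1.1 = α))
      (t := Finset.Ico r (d α))
      (fun q : {q : (Σ x : Fin n, Fin (d x)) // c q.1 = c α} => q.1.2.val) ?_ ?_
    · rw [Nat.card_Ico] at h
      have hrd : r ≤ d α := by
        obtain ⟨⟨x₁, i₁⟩, hxc⟩ := q₁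
        obtain rfl : x₁ = α := hq₁α
        have h1 : r ≤ i₁.val := hhigh _ hq₁ rfl
        have h2 : i₁.val < d x₁ := i₁.isLt
        omega
      omega
    · rintro ⟨⟨xq, iq⟩, hcq⟩ hq
      obtain rfl : xq = α := (Finset.mem_filter.mp hq).2
      rw [Finset.mem_coe, Finset.mem_Ico]
      have h3 : r ≤ iq.val := hhigh _ (Finset.mem_filter.mp hq).1 rfl
      exact ⟨h3, iq.isLt⟩
    · rintro ⟨⟨x₁, i₁⟩, h₁⟩ hq₁' ⟨⟨x₂, i₂⟩, h₂⟩ hq₂' hval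
      have e₁ : x₁ = α := (Finset.mem_filter.mp (Finset.mem_coe.mp hq₁')).2
      have e₂ : x₂ = α := (Finset.mem_filter.mp (Finset.mem_coe.mp hq₂')).2
      subst e₁; subst e₂
      exact Subtype.ext (hmk _ _ _ hval)
  -- the bipartite Hall graph on slots
  let t : {q : (Σ x : Fin n, Fin (d x)) // c q.1 = c α} →
      Finset ((Σ x : Fin n, Fin (d x)) ⊕ Fin Kd) := fun q =>
    Finset.univ.filter (fun z =>
      Sum.elim (fun w => Adj q.1.1 w.1 ∧ (q.1.1 = α ∧ w.1 = β → q.1.2.val < r))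
        (fun _ => True) z)
  -- the target estimate, used in all three cases
  have htarget : ∀ (S : Finset {q : (Σ x : Fin n, Fin (d x)) // c q.1 = c α})
      (W : Finset (Fin n)), S.Nonempty →
      (∀ y ∈ W, ∀ z : Fin (d y), (Sum.inl ⟨y, z⟩ : (Σ x : Fin n, Fin (d x)) ⊕ Fin Kd)
        ∈ S.biUnion t) →
      ∑ y ∈ W, d y + Kd ≤ (S.biUnion t).card := by
    intro S W hS hW
    obtain ⟨q₀, hq₀⟩ := hS
    have hsub : ((W.sigma (fun y => (Finset.univ : Finset (Fin (d y))))).map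
        ⟨Sum.inl, Sum.inl_injective⟩) ∪
        ((Finset.univ : Finset (Fin Kd)).map ⟨Sum.inr, Sum.inr_injective⟩)
        ⊆ S.biUnion t := by
      intro z hz
      rcases Finset.mem_union.mp hz with hz | hz
      · obtain ⟨⟨y, j⟩, hyj, rfl⟩ := Finset.mem_map.mp hz
        have hy := (Finset.mem_sigma.mp hyj).1
        exact hW y hy j
      · obtain ⟨k, -, rfl⟩ := Finset.mem_map.mp hz
        apply Finset.mem_biUnion.mpr ⟨q₀, hq₀, ?_⟩
        simp [t]
    have hdisj : Disjoint ((W.sigma (fun y => (Finset.univ : Finset (Fin (d y))))).map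
        ⟨Sum.inl, Sum.inl_injective⟩)
        ((Finset.univ : Finset (Fin Kd)).map ⟨Sum.inr, Sum.inr_injective⟩) := by
      rw [Finset.disjoint_left]
      rintro z hz₁ hz₂
      obtain ⟨w₁, -, rfl⟩ := Finset.mem_map.mp hz₁
      obtain ⟨k₂, -, h⟩ := Finset.mem_map.mp hz₂
      simp only [Function.Embedding.coeFn_mk] at h
      exact absurd h (by simp)
    calc ∑ y ∈ W, d y + Kd
        = ((W.sigma (fun y => (Finset.univ : Finset (Fin (d y))))).map
            ⟨Sum.inl, Sum.inl_injective⟩).card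
          + ((Finset.univ : Finset (Fin Kd)).map ⟨Sum.inr, Sum.inr_injective⟩).card := by
          rw [Finset.card_map, Finset.card_map, Finset.card_sigma]
          simp
      _ = (((W.sigma (fun y => (Finset.univ : Finset (Fin (d y))))).map
            ⟨Sum.inl, Sum.inl_injective⟩) ∪
            ((Finset.univ : Finset (Fin Kd)).map ⟨Sum.inr, Sum.inr_injective⟩)).card :=
          (Finset.card_union_of_disjoint hdisj).symm
      _ ≤ (S.biUnion t).card := Finset.card_le_card hsub
  have hall : ∀ S : Finset {q : (Σ x : Fin n, Fin (d x)) // c q.1 = c α},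
      S.card ≤ (S.biUnion t).card := by
    intro S
    rcases S.eq_empty_or_nonempty with rfl | hSne
    · simp
    set Sb : Finset (Fin n) := S.image (fun q => q.1.1) with hSbdef
    have hSbsub : Sb ⊆ blacks := by
      intro x hx
      obtain ⟨q, hq, rfl⟩ := Finset.mem_image.mp hx
      simp only [hblacks, Finset.mem_filter, Finset.mem_univ, true_and]
      exact q.2
    set Sw : Finset (Fin n) := Finset.univ.filter
      (fun y => ∃ x ∈ Sb, Adj x y ∧ ¬(x = α ∧ y = β)) with hSwdef
    have hSwmem : ∀ y ∈ Sw, ∀ z : Fin (d y),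
        (Sum.inl ⟨y, z⟩ : (Σ x : Fin n, Fin (d x)) ⊕ Fin Kd) ∈ S.biUnion t := by
      intro y hy z
      simp only [hSwdef, Finset.mem_filter, Finset.mem_univ, true_and] at hy
      obtain ⟨x, hxSb, hadj, hne⟩ := hy
      obtain ⟨q, hq, rfl⟩ := Finset.mem_image.mp hxSb
      apply Finset.mem_biUnion.mpr ⟨q, hq, ?_⟩
      simp only [t, Finset.mem_filter, Finset.mem_univ, true_and, Sum.elim_inl]
      exact ⟨hadj, fun he => absurd ⟨he.1, he.2⟩ hne⟩
    have hScard : S.card = ∑ x ∈ Sb, (S.filter (fun q => q.1.1 = x)).card := by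
      rw [hSbdef]
      exact Finset.card_eq_sum_card_image (fun q => q.1.1) S
    have hsum : ∑ x ∈ blacks \ Sb, d x + ∑ x ∈ Sb, d x = Mb :=
      Finset.sum_sdiff hSbsub
    by_cases hlow : ∃ q ∈ S, q.1.1 = α ∧ q.1.2.val < r
    case pos =>
      have hcrossA : ∀ p ∈ M, p.1 ∈ Sb → p.2 ∈ insert β Sw := by
        intro p hp hpSb
        by_cases he : p.1 = α ∧ p.2 = β
        · rw [he.2]; exact Finset.mem_insert_self _ _
        · refine Finset.mem_insert_of_mem ?_
          simp only [hSwdef, Finset.mem_filter, Finset.mem_univ, true_and]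
          exact ⟨p.1, hpSb, (hMmem p hp).1, he⟩
      have hA : r + s ≤ ∑ x ∈ blacks \ Sb, d x + ∑ y ∈ insert β Sw, d y := by
        rw [← hMc]
        exact count_bound hMblack hdM hcrossA
      have hS1 : S.card ≤ ∑ x ∈ Sb, d x := by
        rw [hScard]
        exact Finset.sum_le_sum (fun x _ => hslot _ x)
      have ht : ∑ y ∈ insert β Sw, d y + Kd ≤ (S.biUnion t).card := by
        apply htarget S _ hSne
        intro y hy z
        rcases Finset.mem_insert.mp hy with rfl | hy
        · obtain ⟨q, hqS, hqα, hqr⟩ := hlow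
          apply Finset.mem_biUnion.mpr ⟨q, hqS, ?_⟩
          simp only [t, Finset.mem_filter, Finset.mem_univ, true_and, Sum.elim_inl]
          constructor
          · rw [hqα]; exact hαβ
          · intro _; exact hqr
        · exact hSwmem y hy z
      omega
    case neg =>
      by_cases hα : α ∈ Sb
      case pos =>
        have hcrossB : ∀ p ∈ B, p.1 ∈ Sb → p.2 ∈ Sw := by
          intro p hp hpSb
          simp only [hSwdef, Finset.mem_filter, Finset.mem_univ, true_and]
          refine ⟨p.1, hpSb, (hBmem p hp).1.1, fun he => ?_⟩
          exact (hBmem p hp).2 (Prod.ext he.1 he.2)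
        have hBcount : s ≤ ∑ x ∈ blacks \ Sb, d x + ∑ y ∈ Sw, d y := by
          rw [← hBc]
          exact count_bound hBblack hdB hcrossB
        push_neg at hlow
        have hαd : (S.filter (fun q => q.1.1 = α)).card + r ≤ d α :=
          hslotα S hlow hα
        have h1 : ∑ x ∈ Sb.erase α, (S.filter (fun q => q.1.1 = x)).card
            + (S.filter (fun q => q.1.1 = α)).card
            = ∑ x ∈ Sb, (S.filter (fun q => q.1.1 = x)).card :=
          Finset.sum_erase_add _ _ hα
        have h2 : ∑ x ∈ Sb.erase α, d x + d α = ∑ x ∈ Sb, d x :=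
          Finset.sum_erase_add _ _ hα
        have h3 : ∑ x ∈ Sb.erase α, (S.filter (fun q => q.1.1 = x)).card
            ≤ ∑ x ∈ Sb.erase α, d x :=
          Finset.sum_le_sum (fun x _ => hslot _ x)
        have ht : ∑ y ∈ Sw, d y + Kd ≤ (S.biUnion t).card :=
          htarget S _ hSne hSwmem
        omega
      case neg =>
        have hcrossA : ∀ p ∈ M, p.1 ∈ Sb → p.2 ∈ Sw := by
          intro p hp hpSb
          simp only [hSwdef, Finset.mem_filter, Finset.mem_univ, true_and]
          refine ⟨p.1, hpSb, (hMmem p hp).1, fun he => ?_⟩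
          rw [he.1] at hpSb
          exact hα hpSb
        have hA : r + s ≤ ∑ x ∈ blacks \ Sb, d x + ∑ y ∈ Sw, d y := by
          rw [← hMc]
          exact count_bound hMblack hdM hcrossA
        have hS1 : S.card ≤ ∑ x ∈ Sb, d x := by
          rw [hScard]
          exact Finset.sum_le_sum (fun x _ => hslot _ x)
        have ht : ∑ y ∈ Sw, d y + Kd ≤ (S.biUnion t).card :=
          htarget S _ hSne hSwmem
        omega
  obtain ⟨f, hfinj, hft⟩ := (Finset.all_card_le_biUnion_card_iff_exists_injective t).mp hall
  set F : Finset {q : (Σ x : Fin n, Fin (d x)) // c q.1 = c α} :=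
    Finset.univ.filter (fun i => (f i).isLeft) with hFdef
  have hFval : ∀ i ∈ F, ∃ w : Σ x : Fin n, Fin (d x), f i = Sum.inl w ∧
      Adj i.1.1 w.1 ∧ (i.1.1 = α ∧ w.1 = β → i.1.2.val < r) := by
    intro i hi
    have hleft := (Finset.mem_filter.mp hi).2
    obtain ⟨w, hw⟩ := Sum.isLeft_iff.mp hleft
    have h := hft i
    rw [hw] at h
    simp only [t, Finset.mem_filter, Finset.mem_univ, true_and, Sum.elim_inl] at h
    exact ⟨w, hw, h.1, h.2⟩
  set g : {q : (Σ x : Fin n, Fin (d x)) // c q.1 = c α} → Fin n :=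
    fun i => Sum.elim (fun w => w.1) (fun _ => β) (f i) with hgdef
  have hgF : ∀ (i : {q : (Σ x : Fin n, Fin (d x)) // c q.1 = c α}) (w), f i = Sum.inl w →
      g i = w.1 := by
    intro i w hw
    rw [hgdef]
    simp [hw]
  set MC₀ : Multiset (Fin n × Fin n) := F.val.map (fun i => (i.1.1, g i)) with hMC₀def
  have hMC₀card : MC₀.card = F.card := by simp [hMC₀def]
  have hcardι : Fintype.card {q : (Σ x : Fin n, Fin (d x)) // c q.1 = c α} = Mb := by
    rw [Fintype.card_subtype]
    have hsig : (Finset.univ.filter (fun q : Σ x : Fin n, Fin (d x) => c q.1 = c α))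
        = blacks.sigma (fun x => Finset.univ) := by
      ext ⟨x, i⟩
      simp [hblacks, Finset.mem_sigma]
    rw [hsig, Finset.card_sigma]
    simp [hMbdef]
  have hFcard : r + s ≤ F.card := by
    have hsplitF := Finset.card_filter_add_card_filter_not
      (s := (Finset.univ : Finset {q : (Σ x : Fin n, Fin (d x)) // c q.1 = c α}))
      (p := fun i => ((f i).isLeft : Prop))
    have hR : (Finset.univ.filter (fun i => ¬ ((f i).isLeft : Prop))).card ≤ Kd := by
      have himg : (Finset.univ.filter (fun i => ¬ ((f i).isLeft : Prop))).image f ⊆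
          (Finset.univ : Finset (Fin Kd)).map ⟨Sum.inr, Sum.inr_injective⟩ := by
        intro z hz
        obtain ⟨i, hi, rfl⟩ := Finset.mem_image.mp hz
        have h2 := (Finset.mem_filter.mp hi).2
        rcases hfi : f i with w | k
        · simp [hfi] at h2
        · simp
      calc (Finset.univ.filter (fun i => ¬ ((f i).isLeft : Prop))).card
          = ((Finset.univ.filter (fun i => ¬ ((f i).isLeft : Prop))).image f).card :=
            (Finset.card_image_of_injOn hfinj.injOn).symm
        _ ≤ ((Finset.univ : Finset (Fin Kd)).map ⟨Sum.inr, Sum.inr_injective⟩).card :=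
            Finset.card_le_card himg
        _ = Kd := by simp
    have huniv : (Finset.univ : Finset {q : (Σ x : Fin n, Fin (d x)) // c q.1 = c α}).card
        = Mb := by rw [Finset.card_univ, hcardι]
    have hFeq : F.card = (Finset.univ.filter
        (fun i : {q : (Σ x : Fin n, Fin (d x)) // c q.1 = c α} =>
          ((f i).isLeft : Prop))).card := by rw [hFdef]
    omega
  have hMC₀mem : ∀ p ∈ MC₀, Adj p.1 p.2 ∧ c p.1 = c α := by
    intro p hp
    obtain ⟨i, hi, rfl⟩ := Multiset.mem_map.mp hp
    have hiF : i ∈ F := Finset.mem_val.mp hi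
    obtain ⟨w, hw, hadj, -⟩ := hFval i hiF
    have hg0 := hgF i w hw
    refine ⟨?_, i.2⟩
    show Adj i.1.1 (g i)
    rw [hg0]
    exact hadj
  have hMC₀snd : ∀ p ∈ MC₀, c p.2 ≠ c α := by
    intro p hp
    obtain ⟨i, hi, rfl⟩ := Multiset.mem_map.mp hp
    have hiF : i ∈ F := Finset.mem_val.mp hi
    obtain ⟨w, hw, hadj, -⟩ := hFval i hiF
    have hg0 := hgF i w hw
    show c (g i) ≠ c α
    rw [hg0]
    intro heq
    exact hcol _ _ hadj (i.2.trans heq.symm)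
  have hfst : ∀ x, fstC MC₀ x ≤ d x := by
    intro x
    have heq : fstC MC₀ x = (F.filter (fun i => i.1.1 = x)).card := by
      rw [fstC, hMC₀def, Multiset.filter_map, Multiset.card_map]
      rfl
    rw [heq]
    exact hslot F x
  have hsnd : ∀ y, sndC MC₀ y ≤ d y := by
    intro y
    have heq : sndC MC₀ y = (F.filter (fun i => g i = y)).card := by
      rw [sndC, hMC₀def, Multiset.filter_map, Multiset.card_map]
      rfl
    rw [heq]
    have h := Finset.card_le_card_of_injOn (s := F.filter (fun i => g i = y))
      (t := Finset.range (d y))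
      (fun i => Sum.elim (fun w : Σ x : Fin n, Fin (d x) => w.2.val) (fun _ => 0) (f i)) ?_ ?_
    · simpa using h
    · intro i hi
      obtain ⟨hiF, higy⟩ := Finset.mem_filter.mp hi
      obtain ⟨⟨yw, jw⟩, hw, -, -⟩ := hFval i hiF
      have hgy : yw = y := by
        have h2 := hgF i _ hw
        rw [← higy, h2]
      have h5 : d yw = d y := congrArg (fun z => d z) hgy
      show Sum.elim (fun w : Σ x : Fin n, Fin (d x) => w.2.val) (fun _ => 0) (f i)
        ∈ Finset.range (d y)
      rw [hw]
      simp only [Sum.elim_inl, Finset.mem_range]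
      have h6 := jw.isLt
      omega
    · intro i₁ hi₁ i₂ hi₂ hval
      obtain ⟨hiF₁, hg₁⟩ := Finset.mem_filter.mp (Finset.mem_coe.mp hi₁)
      obtain ⟨hiF₂, hg₂⟩ := Finset.mem_filter.mp (Finset.mem_coe.mp hi₂)
      obtain ⟨⟨y₁, j₁⟩, hw₁, -, -⟩ := hFval i₁ hiF₁
      obtain ⟨⟨y₂, j₂⟩, hw₂, -, -⟩ := hFval i₂ hiF₂
      have e₁ : y₁ = y := by
        have h2 := hgF i₁ _ hw₁
        rw [← hg₁, h2]
      have e₂ : y₂ = y := by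
        have h2 := hgF i₂ _ hw₂
        rw [← hg₂, h2]
      subst e₁; subst e₂
      have hval' : Sum.elim (fun w : Σ x : Fin n, Fin (d x) => w.2.val) (fun _ => 0) (f i₁)
          = Sum.elim (fun w : Σ x : Fin n, Fin (d x) => w.2.val) (fun _ => 0) (f i₂) := hval
      rw [hw₁, hw₂] at hval'
      simp only [Sum.elim_inl] at hval'
      apply hfinj
      rw [hw₁, hw₂]
      exact congrArg Sum.inl (hmk _ _ _ hval')
  have he₀ : (MC₀.filter (fun p => p = (α, β))).card ≤ r := by
    have heq : (MC₀.filter (fun p => p = (α, β))).card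
        = (F.filter (fun i => (i.1.1, g i) = (α, β))).card := by
      rw [hMC₀def, Multiset.filter_map, Multiset.card_map]
      rfl
    rw [heq]
    have h := Finset.card_le_card_of_injOn
      (s := F.filter (fun i => (i.1.1, g i) = (α, β)))
      (t := Finset.range r)
      (fun i : {q : (Σ x : Fin n, Fin (d x)) // c q.1 = c α} => i.1.2.val) ?_ ?_
    · simpa using h
    · intro i hi
      obtain ⟨hiF, hpe⟩ := Finset.mem_filter.mp hi
      obtain ⟨w, hw, -, himp⟩ := hFval i hiF
      rw [Prod.mk.injEq] at hpe
      rw [Finset.mem_coe, Finset.mem_range]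
      apply himp
      refine ⟨hpe.1, ?_⟩
      rw [← hgF i _ hw]
      exact hpe.2
    · intro i₁ hi₁ i₂ hi₂ hval
      obtain ⟨-, hpe₁⟩ := Finset.mem_filter.mp (Finset.mem_coe.mp hi₁)
      obtain ⟨-, hpe₂⟩ := Finset.mem_filter.mp (Finset.mem_coe.mp hi₂)
      obtain ⟨⟨x₁, j₁⟩, hc₁⟩ := i₁
      obtain ⟨⟨x₂, j₂⟩, hc₂⟩ := i₂
      have e₁ : x₁ = α := by simpa using congrArg Prod.fst hpe₁
      have e₂ : x₂ = α := by simpa using congrArg Prod.fst hpe₂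
      subst e₁
      subst e₂
      exact Subtype.ext (hmk _ _ _ hval)
  have hsvMC₀ : ∀ x, sv MC₀ x ≤ d x := by
    intro x
    rw [sv_apply]
    by_cases hx : c x = c α
    · have hzero : sndC MC₀ x = 0 := by
        rw [sndC, Multiset.card_eq_zero, Multiset.filter_eq_nil]
        intro p hp hpx
        exact hMC₀snd p hp (by rw [hpx]; exact hx)
      have := hfst x
      omega
    · have hzero : fstC MC₀ x = 0 := by
        rw [fstC, Multiset.card_eq_zero, Multiset.filter_eq_nil]
        intro p hp hpx
        exact hx (by rw [← hpx]; exact (hMC₀mem p hp).2)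
      have := hsnd x
      omega
  obtain ⟨MC, hMCle, hMCcard⟩ := exists_le_card MC₀ (r + s)
    (by rw [hMC₀card]; exact hFcard)
  have hMCmem : ∀ p ∈ MC, Adj p.1 p.2 ∧ c p.1 = c α :=
    fun p hp => hMC₀mem p (Multiset.mem_of_le hMCle hp)
  have hsvMC : ∀ x, sv MC x ≤ d x := by
    intro x
    obtain ⟨Z, hZ⟩ := Multiset.le_iff_exists_add.mp hMCle
    have h1 : sv MC₀ x = sv MC x + sv Z x := by
      rw [hZ, sv_add, Finsupp.add_apply]
    have h2 := hsvMC₀ x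
    omega
  have he₀MC : (MC.filter (fun p => p = (α, β))).card ≤ r :=
    le_trans (Multiset.card_le_card (Multiset.filter_le_filter _ hMCle)) he₀
  have hsplitMC := Multiset.filter_add_not (fun p : Fin n × Fin n => p = (α, β)) MC
  have hcard2 : (MC.filter (fun p => p = (α, β))).card
      + (MC.filter (fun p => ¬ p = (α, β))).card = r + s := by
    rw [← Multiset.card_add, hsplitMC, hMCcard]
  obtain ⟨M₂, hM₂le, hM₂card⟩ := exists_le_card
    (MC.filter (fun p => ¬ p = (α, β))) s (by omega)
  have hM₂MC : M₂ ≤ MC := le_trans hM₂le (Multiset.filter_le _ _)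
  have haddM : (MC - M₂) + M₂ = MC := tsub_add_cancel_of_le hM₂MC
  refine ⟨MC - M₂, M₂, ?_, hM₂card, ?_, ?_, ?_⟩
  · have hc := congrArg Multiset.card haddM
    rw [Multiset.card_add] at hc
    omega
  · intro p hp
    exact (hMCmem p (Multiset.mem_of_le (Multiset.sub_le_self _ _) hp)).1
  · intro p hp
    have hpMC := Multiset.mem_of_le hM₂MC hp
    have hpne : ¬ p = (α, β) := (Multiset.mem_filter.mp (Multiset.mem_of_le hM₂le hp)).2
    refine ⟨(hMCmem p hpMC).1, ?_⟩
    rintro (he | he)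
    · exact hpne he
    · have h2 := (hMCmem p hpMC).2
      rw [he] at h2
      exact hcαβ h2.symm
  · rw [← sv_add, haddM]
    exact Finsupp.le_def.mpr hsvMC


/-- exponent vectors that are sums of `k` pairs satisfying `Q` -/
def vecs (Q : Fin n × Fin n → Prop) (k : ℕ) : Set (Fin n →₀ ℕ) :=
  {d | ∃ M : Multiset (Fin n × Fin n), M.card = k ∧ (∀ p ∈ M, Q p) ∧ d = sv M}

lemma vecs_succ (Q : Fin n × Fin n → Prop) (k : ℕ) :
    {d | ∃ d₁ ∈ vecs Q k, ∃ d₂ ∈ vecs Q 1, d = d₁ + d₂} = vecs Q (k + 1) := by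
  ext d
  constructor
  · rintro ⟨d₁, ⟨M₁, hc₁, hQ₁, rfl⟩, d₂, ⟨M₂, hc₂, hQ₂, rfl⟩, rfl⟩
    refine ⟨M₁ + M₂, by simp [hc₁, hc₂], ?_, by simp⟩
    intro p hp; rcases Multiset.mem_add.mp hp with h | h
    exacts [hQ₁ p h, hQ₂ p h]
  · rintro ⟨M, hc, hQ, rfl⟩
    have : 0 < M.card := by omega
    obtain ⟨p, hp⟩ := Multiset.card_pos_iff_exists_mem.mp this
    obtain ⟨M', rfl⟩ := Multiset.exists_cons_of_mem hp
    exact ⟨sv M', ⟨M', by simpa using hc, fun q hq => hQ q (by simp [hq]), rfl⟩,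
      ev p, ⟨{p}, by simp, by simpa using hQ p (by simp), by simp [sv]⟩, by simp [add_comm]⟩

variable {K : Type*} [Field K]

lemma span_im_mul_span_im (S T : Set (Fin n →₀ ℕ)) :
    Ideal.span ((fun d => monomial d (1 : K)) '' S) * Ideal.span ((fun d => monomial d (1 : K)) '' T)
      = Ideal.span ((fun d => monomial d (1 : K)) '' {d | ∃ d₁ ∈ S, ∃ d₂ ∈ T, d = d₁ + d₂}) := by
  rw [Ideal.span_mul_span']
  congr 1
  ext q
  constructor
  · rintro ⟨-, ⟨d₁, h₁, rfl⟩, -, ⟨d₂, h₂, rfl⟩, rfl⟩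
    exact ⟨d₁ + d₂, ⟨d₁, h₁, d₂, h₂, rfl⟩, by simp [monomial_mul]⟩
  · rintro ⟨d, ⟨d₁, h₁, d₂, h₂, rfl⟩, rfl⟩
    exact ⟨monomial d₁ 1, ⟨d₁, h₁, rfl⟩, monomial d₂ 1, ⟨d₂, h₂, rfl⟩, by simp [monomial_mul]⟩

lemma vecs_one (Q : Fin n × Fin n → Prop) :
    (fun d => monomial d (1 : K)) '' vecs Q 1 = {m | ∃ a b, Q (a, b) ∧ m = X a * X b} := by
  ext q
  constructor
  · rintro ⟨d, ⟨M, hc, hQ, rfl⟩, rfl⟩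
    obtain ⟨p, rfl⟩ := Multiset.card_eq_one.mp hc
    refine ⟨p.1, p.2, hQ p (by simp), ?_⟩
    simp [sv, ev, X, monomial_mul]
  · rintro ⟨a, b, hQ, rfl⟩
    refine ⟨ev (a, b), ⟨{(a, b)}, by simp, by simpa using hQ, by simp [sv]⟩, ?_⟩
    simp [ev, X, monomial_mul]

lemma vecs_pow (Q : Fin n × Fin n → Prop) (k : ℕ) :
    (Ideal.span ((fun d => monomial d (1 : K)) '' vecs Q 1)) ^ k
      = Ideal.span ((fun d => monomial d (1 : K)) '' vecs Q k) := by
  induction k with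
  | zero =>
    rw [pow_zero]
    have h0 : vecs (n := n) Q 0 = {0} := by
      ext d
      constructor
      · rintro ⟨M, hc, -, rfl⟩
        rw [Multiset.card_eq_zero.mp hc]; simp
      · rintro rfl; exact ⟨0, by simp⟩
    rw [h0]
    simp only [Set.image_singleton, monomial_zero', C_1, Ideal.span_singleton_one,
      Ideal.one_eq_top]
  | succ k ih =>
    rw [pow_succ, ih, span_im_mul_span_im, vecs_succ]


end Stmt17

open Stmt17

/-- For a bipartite graph `G` with edge ideal `I` and `J` the edge ideal
of `G` minus the edge `{α, β}`, one has `I^r J^s = I^{r+s} ∩ J^s` for all `r, s ≥ 0`. -/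
theorem stmt17 {n : ℕ} {K : Type*} [Field K]
    (G : SimpleGraph (Fin n))
    (hbip : ∃ c : Fin n → Bool, ∀ a b, G.Adj a b → c a ≠ c b)
    (α β : Fin n) (hadj : G.Adj α β)
    (I J : Ideal (MvPolynomial (Fin n) K))
    (hI : I = Ideal.span {m : MvPolynomial (Fin n) K |
      ∃ a b, G.Adj a b ∧ m = X a * X b})
    (hJ : J = Ideal.span {m : MvPolynomial (Fin n) K |
      ∃ a b, G.Adj a b ∧ ¬((a = α ∧ b = β) ∨ (a = β ∧ b = α)) ∧ m = X a * X b})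
    (r s : ℕ) :
    I ^ r * J ^ s = I ^ (r + s) ⊓ J ^ s := by
  obtain ⟨c, hc⟩ := hbip
  set QI : Fin n × Fin n → Prop := fun p => G.Adj p.1 p.2 with hQI
  set QJ : Fin n × Fin n → Prop := fun p =>
    G.Adj p.1 p.2 ∧ ¬((p.1 = α ∧ p.2 = β) ∨ (p.1 = β ∧ p.2 = α)) with hQJ
  have eI : I = Ideal.span ((fun d => monomial d (1 : K)) '' vecs QI 1) := by
    rw [hI, vecs_one]
  have eJ : J = Ideal.span ((fun d => monomial d (1 : K)) '' vecs QJ 1) := by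
    rw [hJ, vecs_one]
    congr 1
    ext m
    constructor
    · rintro ⟨a, b, h1, h2, rfl⟩; exact ⟨a, b, ⟨h1, h2⟩, rfl⟩
    · rintro ⟨a, b, ⟨h1, h2⟩, rfl⟩; exact ⟨a, b, h1, h2, rfl⟩
  have hJI : J ≤ I := by
    rw [hI, hJ]
    apply Ideal.span_mono
    rintro m ⟨a, b, h1, -, rfl⟩
    exact ⟨a, b, h1, rfl⟩
  apply le_antisymm
  · refine le_inf ?_ ?_
    · calc I ^ r * J ^ s ≤ I ^ r * I ^ s :=
            Ideal.mul_mono_right (Ideal.pow_right_mono hJI s)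
        _ = I ^ (r + s) := (pow_add I r s).symm
    · exact (Ideal.mul_le_right : I ^ r * J ^ s ≤ J ^ s)
  · rw [eI, eJ, vecs_pow, vecs_pow, vecs_pow, span_im_mul_span_im]
    intro f hf
    obtain ⟨hf1, hf2⟩ := hf
    rw [SetLike.mem_coe] at hf1 hf2
    rw [mem_ideal_span_monomial_image] at hf1 hf2 ⊢
    intro xi hxi
    obtain ⟨eA, ⟨MA, hMAc, hMAadj, rfl⟩, hAle⟩ := hf1 xi hxi
    obtain ⟨eB, ⟨MB, hMBc, hMBadj, rfl⟩, hBle⟩ := hf2 xi hxi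
    obtain ⟨M₁, M₂, h1c, h2c, h1a, h2a, hle⟩ :=
      core (c := c) (fun a b h => h.symm) hc hadj r s xi MA MB hMAc hMAadj hAle hMBc
        (fun p hp => (hMBadj p hp).1)
        (fun p hp => by
          have := (hMBadj p hp).2
          simp only [Prod.ext_iff]
          tauto)
        hBle
    refine ⟨sv M₁ + sv M₂, ⟨sv M₁, ⟨M₁, h1c, h1a, rfl⟩, sv M₂, ⟨M₂, ?_, ?_, rfl⟩, rfl⟩, hle⟩
    · exact h2c
    · intro p hp
      refine ⟨(h2a p hp).1, ?_⟩
      have := (h2a p hp).2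
      simp only [Prod.ext_iff] at this
      tauto
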